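/- Let G₁₁ (q × r), G₁₂ (q × m), G₂₁ (p × r), G₂₂ (p × m) be complex matrices with G₁₂ᴴG₁₂ invertible, let X (m × p) and Y (m × m) be complex matrices with Y invertible and M := Y − X·G₂₂ invertible, set G₁₂^L := (G₁₂ᴴG₁₂)⁻¹G₁₂ᴴ, Φ := M·G₁₂^L, Ψ := I − G₁₂·G₁₂^L, T := G₁₁ + G₁₂·M⁻¹·X·G₂₁, and let Γ̂ be a Hermitian r × r complex matrix. Then Γ̂ − Tᴴ·T is positive semidefinite if and only if the block matrix fromBlocks (Γ̂ − (Ψ·G₁₁)ᴴ·(Ψ·G₁₁)) (Φ·G₁₁ + X·G₂₁)ᴴ (Φ·G₁₁ + X·G₂₁) (ΦΦᴴ) is positive semidefinite. -/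

import Mathlib

open Matrix ComplexOrder

/-- Left inverse `G^L := (GᴴG)⁻¹Gᴴ` of a full-column-rank matrix. -/
noncomputable def leftInv {q m : ℕ} (G : Matrix (Fin q) (Fin m) ℂ) :
    Matrix (Fin m) (Fin q) ℂ :=
  (Gᴴ * G)⁻¹ * Gᴴ

lemma posDef_of_posSemidef_isUnit {n : ℕ} {A : Matrix (Fin n) (Fin n) ℂ}
    (h : A.PosSemidef) (hu : IsUnit A) : A.PosDef := by
  rw [posDef_iff_dotProduct_mulVec]
  refine ⟨h.1, fun x hx => ?_⟩
  rcases ((posSemidef_iff_dotProduct_mulVec.mp h).2 x).lt_or_eq with hlt | heq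
  · exact hlt
  · exfalso
    apply hx
    have h0 : A *ᵥ x = 0 := (h.dotProduct_mulVec_zero_iff x).mp heq.symm
    have hinj := Matrix.mulVec_injective_iff_isUnit.mpr hu
    have : A *ᵥ x = A *ᵥ 0 := by simp [h0]
    exact hinj this

lemma posDef_mul_mul_conjTranspose {n : ℕ} {P M : Matrix (Fin n) (Fin n) ℂ}
    (hP : P.PosDef) (hM : IsUnit M) : (M * P * Mᴴ).PosDef := by
  rw [posDef_iff_dotProduct_mulVec]
  refine ⟨?_, fun x hx => ?_⟩
  · have := hP.1
    simp only [Matrix.IsHermitian, conjTranspose_mul, conjTranspose_conjTranspose,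
      Matrix.mul_assoc]
    rw [this.eq]
  · have hxne : Mᴴ *ᵥ x ≠ 0 := by
      intro h0
      apply hx
      have hMH : IsUnit Mᴴ := by
        rw [Matrix.isUnit_iff_isUnit_det, Matrix.det_conjTranspose]
        exact ((Matrix.isUnit_iff_isUnit_det M).mp hM).star
      have hinj := Matrix.mulVec_injective_iff_isUnit.mpr hMH
      have : Mᴴ *ᵥ x = Mᴴ *ᵥ 0 := by simp [h0]
      exact hinj this
    have := (posDef_iff_dotProduct_mulVec.mp hP).2 (x := Mᴴ *ᵥ x) hxne
    calc (0 : ℂ) < star (Mᴴ *ᵥ x) ⬝ᵥ P *ᵥ (Mᴴ *ᵥ x) := this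
      _ = star x ⬝ᵥ (M * P * Mᴴ) *ᵥ x := by
          rw [star_mulVec, conjTranspose_conjTranspose, ← Matrix.mulVec_mulVec,
            ← Matrix.mulVec_mulVec, Matrix.dotProduct_mulVec (star x)]

/-- Schur-complement reformulation of the pointwise spatial-regret constraint:
with `M := Y − X·G₂₂` invertible, `Φ := M·G₁₂^L`, `Ψ := I − G₁₂·G₁₂^L`,
`T := G₁₁ + G₁₂·M⁻¹·X·G₂₁`, and `Γ̂` Hermitian, `Γ̂ − TᴴT ⪰ 0` holds iff the
block matrix `[[Γ̂ − (ΨG₁₁)ᴴ(ΨG₁₁), (ΦG₁₁ + XG₂₁)ᴴ], [ΦG₁₁ + XG₂₁, ΦΦᴴ]]`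
is positive semidefinite. -/
theorem spatial_regret_schur_equivalence {q r p m : ℕ}
    (G11 : Matrix (Fin q) (Fin r) ℂ) (G12 : Matrix (Fin q) (Fin m) ℂ)
    (G21 : Matrix (Fin p) (Fin r) ℂ) (G22 : Matrix (Fin p) (Fin m) ℂ)
    (hG12 : IsUnit (G12ᴴ * G12))
    (X : Matrix (Fin m) (Fin p) ℂ) (Y : Matrix (Fin m) (Fin m) ℂ)
    (hY : IsUnit Y) (hM : IsUnit (Y - X * G22))
    (Γhat : Matrix (Fin r) (Fin r) ℂ) (hΓ : Γhat.IsHermitian) :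
    (Γhat - (G11 + G12 * (Y - X * G22)⁻¹ * X * G21)ᴴ *
        (G11 + G12 * (Y - X * G22)⁻¹ * X * G21)).PosSemidef ↔
    (Matrix.fromBlocks
        (Γhat - ((1 - G12 * leftInv G12) * G11)ᴴ * ((1 - G12 * leftInv G12) * G11))
        (((Y - X * G22) * leftInv G12) * G11 + X * G21)ᴴ
        (((Y - X * G22) * leftInv G12) * G11 + X * G21)
        (((Y - X * G22) * leftInv G12) * ((Y - X * G22) * leftInv G12)ᴴ)).PosSemidef := by
  set M : Matrix (Fin m) (Fin m) ℂ := Y - X * G22 with hMdef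
  set L : Matrix (Fin m) (Fin q) ℂ := leftInv G12 with hLdef
  set S : Matrix (Fin m) (Fin m) ℂ := G12ᴴ * G12 with hSdef
  set T : Matrix (Fin q) (Fin r) ℂ := G11 + G12 * M⁻¹ * X * G21 with hTdef
  have hSdet : IsUnit S.det := (Matrix.isUnit_iff_isUnit_det S).mp hG12
  have hMdet : IsUnit M.det := (Matrix.isUnit_iff_isUnit_det M).mp hM
  have hMHdet : IsUnit (Mᴴ).det := by
    rw [Matrix.det_conjTranspose]; exact hMdet.star
  have hSH : Sᴴ = S := by
    rw [hSdef, conjTranspose_mul, conjTranspose_conjTranspose]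
  have hLG : L * G12 = 1 := by
    rw [hLdef, leftInv, Matrix.mul_assoc, ← hSdef, Matrix.nonsing_inv_mul S hSdet]
  have hLH : Lᴴ = G12 * S⁻¹ := by
    rw [hLdef, leftInv, conjTranspose_mul, conjTranspose_conjTranspose,
      Matrix.conjTranspose_nonsing_inv, ← hSdef, hSH]
  have hLL : L * Lᴴ = S⁻¹ := by
    rw [hLH, ← Matrix.mul_assoc, hLG, Matrix.one_mul]
  -- properties of the projection P := G12 * L
  have hPH : (G12 * L)ᴴ = G12 * L := by
    rw [conjTranspose_mul, hLH, Matrix.mul_assoc, hLdef, leftInv]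
  have hPP : (G12 * L) * (G12 * L) = G12 * L := by
    rw [Matrix.mul_assoc, ← Matrix.mul_assoc L, hLG, Matrix.one_mul]
  -- D := Φ Φᴴ = M S⁻¹ Mᴴ is positive definite
  have hD : (M * L) * (M * L)ᴴ = M * S⁻¹ * Mᴴ := by
    rw [conjTranspose_mul, ← Matrix.mul_assoc, Matrix.mul_assoc M L, hLL]
  have hSpd : S.PosDef := posDef_of_posSemidef_isUnit
    (Matrix.posSemidef_conjTranspose_mul_self G12) hG12
  have hDpd : ((M * L) * (M * L)ᴴ).PosDef := by
    rw [hD, Matrix.mul_assoc]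
    have := posDef_mul_mul_conjTranspose hSpd.inv hM
    rwa [Matrix.mul_assoc] at this
  haveI : Invertible ((M * L) * (M * L)ᴴ) := hDpd.isUnit.invertible
  -- the Schur complement equivalence for the block matrix
  have hschur := Matrix.PosDef.fromBlocks₂₂
    (Γhat - ((1 - G12 * L) * G11)ᴴ * ((1 - G12 * L) * G11))
    ((M * L) * G11 + X * G21)ᴴ hDpd
  rw [conjTranspose_conjTranspose] at hschur
  rw [hschur]
  -- now show the two matrices agree
  have hB : (M * L) * G11 + X * G21 = (M * L) * T := by
    rw [hTdef, Matrix.mul_add, add_right_inj]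
    rw [show M * L * (G12 * M⁻¹ * X * G21) = M * (L * G12) * (M⁻¹ * (X * G21)) by
      simp only [Matrix.mul_assoc], hLG, Matrix.mul_one,
      Matrix.mul_nonsing_inv_cancel_left M _ hMdet]
  have hPsi : (1 - G12 * L) * G11 = (1 - G12 * L) * T := by
    have hz : (1 - G12 * L) * G12 = 0 := by
      rw [Matrix.sub_mul, Matrix.one_mul, Matrix.mul_assoc, hLG, Matrix.mul_one, sub_self]
    rw [hTdef, Matrix.mul_add, left_eq_add,
      show (1 - G12 * L) * (G12 * M⁻¹ * X * G21) =
        ((1 - G12 * L) * G12) * (M⁻¹ * X * G21) by simp only [Matrix.mul_assoc],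
      hz, Matrix.zero_mul]
  have hDinv : ((M * L) * (M * L)ᴴ)⁻¹ = Mᴴ⁻¹ * S * M⁻¹ := by
    rw [hD, Matrix.mul_inv_rev, Matrix.mul_inv_rev, Matrix.nonsing_inv_nonsing_inv S hSdet,
      Matrix.mul_assoc]
    rw [hSdef]
    simp only [Matrix.mul_assoc]
  have hmid : (M * L)ᴴ * (Mᴴ⁻¹ * S * M⁻¹) * (M * L) = G12 * L := by
    rw [conjTranspose_mul, hLH]
    simp only [Matrix.mul_assoc]
    rw [Matrix.mul_nonsing_inv_cancel_left Mᴴ _ hMHdet,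
      Matrix.nonsing_inv_mul_cancel_left M _ hMdet,
      Matrix.nonsing_inv_mul_cancel_left S _ hSdet]
  have hΨΨ : ((1 - G12 * L))ᴴ * (1 - G12 * L) = 1 - G12 * L := by
    rw [conjTranspose_sub, conjTranspose_one, hPH, Matrix.sub_mul, Matrix.mul_sub,
      Matrix.mul_sub, Matrix.one_mul, Matrix.mul_one, hPP]
    simp only [Matrix.one_mul, Matrix.mul_one]
    abel
  have key : Γhat - ((1 - G12 * L) * G11)ᴴ * ((1 - G12 * L) * G11) -
      ((M * L) * G11 + X * G21)ᴴ * ((M * L) * (M * L)ᴴ)⁻¹ * ((M * L) * G11 + X * G21) =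
      Γhat - Tᴴ * T := by
    rw [hB, hPsi, hDinv]
    have e1 : ((1 - G12 * L) * T)ᴴ * ((1 - G12 * L) * T) = Tᴴ * ((1 - G12 * L) * T) := by
      rw [conjTranspose_mul, Matrix.mul_assoc, ← Matrix.mul_assoc ((1 - G12 * L))ᴴ, hΨΨ]
    have e2 : ((M * L) * T)ᴴ * (Mᴴ⁻¹ * S * M⁻¹) * ((M * L) * T) =
        Tᴴ * ((G12 * L) * T) := by
      rw [conjTranspose_mul, Matrix.mul_assoc Tᴴ, ← hmid]
      simp only [Matrix.mul_assoc]
    rw [e1, e2, sub_sub, ← Matrix.mul_add, ← Matrix.add_mul]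
    congr 2
    rw [sub_add_cancel, Matrix.one_mul]
  rw [key]
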